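/- If f: (−1/2, 1/2) → ℝ is differentiable, satisfies (1−2z) f'(z) − (3−z) f(z) = 0 and f(0) = 1, then f(z) = e^{z/2} (1−2z)^{−5/4} for all z in (−1/2, 1/2). -/

import Mathlib

open Real Set

/-- The separation-of-variables solution of `(1-2z)f' - (3-z)f = 0`, `f(0)=1`:
`f(z) = e^{z/2}(1-2z)^{-5/4}` on `(-1/2, 1/2)`. -/
theorem stmt_15 (f : ℝ → ℝ)
    (hf : ∀ z ∈ Ioo (-(1 : ℝ) / 2) (1 / 2), DifferentiableAt ℝ f z)
    (hode : ∀ z ∈ Ioo (-(1 : ℝ) / 2) (1 / 2),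
      (1 - 2 * z) * deriv f z - (3 - z) * f z = 0)
    (h0 : f 0 = 1) :
    ∀ z ∈ Ioo (-(1 : ℝ) / 2) (1 / 2),
      f z = Real.exp (z / 2) * (1 - 2 * z) ^ (-(5 : ℝ) / 4) := by
  set s : Set ℝ := Ioo (-(1 : ℝ) / 2) (1 / 2) with hs
  have hopen : IsOpen s := isOpen_Ioo
  set g : ℝ → ℝ := fun z => f z * (Real.exp (-z / 2) * (1 - 2 * z) ^ ((5 : ℝ) / 4)) with hg
  have hpos : ∀ z ∈ s, (0 : ℝ) < 1 - 2 * z := by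
    intro z hz
    rcases hz with ⟨_, h2⟩
    nlinarith
  -- derivative of g is zero on s
  have hderiv : ∀ z ∈ s, HasDerivAt g 0 z := by
    intro z hz
    have hp := hpos z hz
    have hne : (1 - 2 * z) ≠ 0 := ne_of_gt hp
    have hf' : HasDerivAt f (deriv f z) z := (hf z hz).hasDerivAt
    have hexp : HasDerivAt (fun z : ℝ => Real.exp (-z / 2)) (Real.exp (-z / 2) * (-1 / 2)) z := by
      have h1 : HasDerivAt (fun z : ℝ => -z / 2) (-1 / 2) z := by
        simpa using ((hasDerivAt_id z).neg.div_const 2)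
      simpa using h1.exp
    have hlin : HasDerivAt (fun z : ℝ => 1 - 2 * z) (-2) z := by
      simpa using ((hasDerivAt_id z).const_mul (2 : ℝ)).const_sub 1
    have hrpow : HasDerivAt (fun z : ℝ => (1 - 2 * z) ^ ((5 : ℝ) / 4))
        ((5 / 4) * (1 - 2 * z) ^ ((5 : ℝ) / 4 - 1) * (-2)) z := by
      have := (Real.hasDerivAt_rpow_const (x := 1 - 2 * z) (p := (5 : ℝ) / 4)
        (Or.inl hne)).comp z hlin
      exact this
    have hmul := (hf'.mul (hexp.mul hrpow))
    have key : deriv f z * (Real.exp (-z / 2) * (1 - 2 * z) ^ ((5 : ℝ) / 4)) +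
        f z * (Real.exp (-z / 2) * (-1 / 2) * (1 - 2 * z) ^ ((5 : ℝ) / 4) +
          Real.exp (-z / 2) * (5 / 4 * (1 - 2 * z) ^ ((5 : ℝ) / 4 - 1) * (-2))) = 0 := by
      have hode' := hode z hz
      have hd : deriv f z = (3 - z) * f z / (1 - 2 * z) := by
        rw [eq_div_iff hne]
        linarith
      have hsplit : (1 - 2 * z) ^ ((5 : ℝ) / 4) =
          (1 - 2 * z) ^ ((5 : ℝ) / 4 - 1) * (1 - 2 * z) := by
        rw [← Real.rpow_add_one hne]
        ring_nf
      rw [hd, hsplit]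
      have hex := Real.exp_pos (-z / 2)
      have hc : (3 - z) * f z / (1 - 2 * z) * (1 - 2 * z) = (3 - z) * f z := div_mul_cancel₀ _ hne
      linear_combination (Real.exp (-z / 2) * (1 - 2 * z) ^ ((5 : ℝ) / 4 - 1)) * hc
    rw [hg]
    exact hmul.congr_deriv (by simp only [Pi.mul_apply]; linear_combination key)
  -- g is constant on s
  have hconst : ∀ z ∈ s, g z = g 0 := by
    intro z hz
    have h0s : (0 : ℝ) ∈ s := by constructor <;> norm_num
    have hdiff : DifferentiableOn ℝ g s := fun x hx =>
      ((hderiv x hx).differentiableAt).differentiableWithinAt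
    refine (convex_Ioo _ _).is_const_of_fderivWithin_eq_zero hdiff ?_ hz h0s
    intro x hx
    have : fderiv ℝ g x = 0 := by
      have := (hderiv x hx).hasFDerivAt.fderiv
      rw [this]
      ext
      simp
    rw [fderivWithin_eq_fderiv ((hopen.uniqueDiffOn) x hx) (hderiv x hx).differentiableAt, this]
  intro z hz
  have hp := hpos z hz
  have hgz := hconst z hz
  have hg0 : g 0 = 1 := by
    simp [hg, h0, Real.rpow_natCast]
  rw [hg0] at hgz
  have hne : (1 - 2 * z) ^ ((5 : ℝ) / 4) ≠ 0 := ne_of_gt (Real.rpow_pos_of_pos hp _)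
  have hrw : (1 - 2 * z) ^ (-(5 : ℝ) / 4) = ((1 - 2 * z) ^ ((5 : ℝ) / 4))⁻¹ := by
    rw [← Real.rpow_neg hp.le]
    norm_num
  have hexpne : Real.exp (-z / 2) ≠ 0 := Real.exp_ne_zero _
  have : f z * (Real.exp (-z / 2) * (1 - 2 * z) ^ ((5 : ℝ) / 4)) = 1 := hgz
  rw [hrw]
  have hinv : Real.exp (z / 2) = (Real.exp (-z / 2))⁻¹ := by
    rw [← Real.exp_neg]; ring_nf
  rw [hinv]
  field_simp at this ⊢
  rw [eq_div_iff (Real.rpow_pos_of_pos (by linarith) _).ne']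
  linarith [this]
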